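/- Let E be a nonzero real Banach space and A a norm-closed linear monotone subspace of E × E*. Then the following are equivalent: (i) the adjoint subspace A* ⊆ E* × E** is monotone; (ii) for all (y*, y**) ∈ E* × E**, inf_{(x, x*) ∈ A} ⟨y* − x*, y** − x̂⟩ ≤ 0; (iii) for all (y*, y**) ∈ A⁰, inf_{(x, x*) ∈ A} ⟨y* − x*, y** − x̂⟩ ≤ 0; (iv) A is maximally monotone of type (NI). -/

import Mathlib

open NormedSpace

/-- A nonempty subset of `E × E*` is monotone. -/
def MonoSet {E : Type*} [NormedAddCommGroup E] [NormedSpace ℝ E]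
    (A : Set (E × StrongDual ℝ E)) : Prop :=
  A.Nonempty ∧ ∀ p ∈ A, ∀ q ∈ A, 0 ≤ (p.2 - q.2) (p.1 - q.1)

/-- A nonempty subset of `E* × E**` is monotone. -/
def MonoSetStar {E : Type*} [NormedAddCommGroup E] [NormedSpace ℝ E]
    (D : Set (StrongDual ℝ E × StrongDual ℝ (StrongDual ℝ E))) : Prop :=
  D.Nonempty ∧ ∀ p ∈ D, ∀ q ∈ D, 0 ≤ (p.2 - q.2) (p.1 - q.1)

/-- Maximal monotonicity in `E × E*`. -/
def MaxMonoSet {E : Type*} [NormedAddCommGroup E] [NormedSpace ℝ E]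
    (A : Set (E × StrongDual ℝ E)) : Prop :=
  MonoSet A ∧ ∀ A' : Set (E × StrongDual ℝ E), MonoSet A' → A ⊆ A' → A' = A

/-- The Arens adjoint subspace `A* ⊆ E* × E**` of a linear subspace `A ⊆ E × E*`. -/
def adjointSubspace {E : Type*} [NormedAddCommGroup E] [NormedSpace ℝ E]
    (A : Set (E × StrongDual ℝ E)) : Set (StrongDual ℝ E × StrongDual ℝ (StrongDual ℝ E)) :=
  {q | ∀ p ∈ A, q.1 p.1 = q.2 p.2}

section Helpers

variable {E : Type*} [NormedAddCommGroup E] [NormedSpace ℝ E]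

private lemma abs_le_of_sq_le {a b : ℝ} (hb : 0 ≤ b) (h : a ^ 2 ≤ b ^ 2) : |a| ≤ b := by
  rcases abs_cases a with ⟨h1, _⟩ | ⟨h1, _⟩ <;> nlinarith

private lemma abs_le_two_eps {w δ s ε n : ℝ} (h1 : w ^ 2 ≤ 4 * δ * s) (h3 : δ ≤ ε ^ 2)
    (h4 : 0 ≤ s) (h5 : s ≤ n ^ 2) (h6 : 0 ≤ n) (h7 : 0 ≤ ε) : |w| ≤ 2 * ε * n := by
  apply abs_le_of_sq_le (by positivity)
  nlinarith [mul_nonneg (sub_nonneg.2 h3) h4,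
    mul_nonneg (mul_nonneg h7 h7) (sub_nonneg.2 h5)]

/-- The near-minimizer has `S` close to `M`. -/
private lemma S_upper {M S d e a : ℝ} (hM0 : 0 ≤ M) (hS0 : 0 ≤ S) (hd0 : 0 ≤ d)
    (hde : d < e ^ 2) (he : 0 < e) (ha0 : 0 ≤ a) (ha2 : a ^ 2 = M)
    (hL2 : (M + S - d) ^ 2 ≤ 4 * M * S) : S ≤ M + 2 * a * e + e ^ 2 := by
  set b : ℝ := Real.sqrt S with hb_def
  have hb0 : 0 ≤ b := Real.sqrt_nonneg S
  have hb2 : b ^ 2 = S := Real.sq_sqrt hS0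
  have hX : (a ^ 2 + b ^ 2 - d) ^ 2 ≤ 4 * a ^ 2 * b ^ 2 := by
    rw [ha2, hb2]; exact hL2
  have hprod : ((a - b) ^ 2 - d) * ((a + b) ^ 2 - d) ≤ 0 := by nlinarith [hX]
  by_contra hcon
  push_neg at hcon
  have hcon' : a ^ 2 + 2 * a * e + e ^ 2 < b ^ 2 := by rw [ha2]; linarith
  have hab : a + e < b := by
    by_contra h3
    push_neg at h3
    nlinarith
  have h1 : 0 < (a - b) ^ 2 - d := by nlinarith
  have h2 : (a + b) ^ 2 - d ≤ 0 := by
    by_contra h3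
    push_neg at h3
    nlinarith [mul_pos h1 h3]
  have h4 : e < a + b := by linarith
  nlinarith [h4, h2, hd0]

/-- If `t * l ≤ M + t ^ 2 * s` for all `t`, then `l ^ 2 ≤ 4 * M * s`. -/
private lemma sq_le_of_forall_quad {l s M : ℝ} (hs : 0 ≤ s) (hM : 0 ≤ M)
    (h : ∀ t : ℝ, t * l ≤ M + t ^ 2 * s) : l ^ 2 ≤ 4 * M * s := by
  rcases eq_or_lt_of_le hs with hs0 | hs0
  · have hl : l = 0 := by
      by_contra hl
      have h1 := h ((M + 1) / l)
      rw [div_mul_cancel₀ _ hl] at h1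
      nlinarith [sq_nonneg ((M + 1) / l)]
    rw [hl]
    nlinarith
  · set t := l / (2 * s) with ht
    have hts : 2 * s * t = l := by
      rw [ht]; field_simp
    have h2 := h t
    have h4 : t * l = 2 * s * t ^ 2 := by rw [← hts]; ring
    have h3 : s * t ^ 2 ≤ M := by nlinarith
    nlinarith [mul_le_mul_of_nonneg_left h3 (le_of_lt hs0)]

/-- Expansion of the basic pairing expression. -/
private lemma pair_expand (g' : StrongDual ℝ E) (g'' : StrongDual ℝ (StrongDual ℝ E)) (x : E) (x' : StrongDual ℝ E) :
    (g'' - inclusionInDoubleDual ℝ E x) (g' - x')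
      = g'' g' - g'' x' - g' x + x' x := by
  simp only [ContinuousLinearMap.sub_apply, map_sub, NormedSpace.dual_def]
  ring

variable (A : Subspace ℝ (E × StrongDual ℝ E))

/-- The function whose infimum appears in the statement. -/
private noncomputable def fE (y' : StrongDual ℝ E) (y'' : StrongDual ℝ (StrongDual ℝ E)) : ↥A → ℝ :=
  fun p => ((y'' - inclusionInDoubleDual ℝ E ((p : E × StrongDual ℝ E)).1)
    (y' - ((p : E × StrongDual ℝ E)).2))

private lemma fE_apply (y' : StrongDual ℝ E) (y'' : StrongDual ℝ (StrongDual ℝ E)) (p : ↥A) :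
    fE A y' y'' p = y'' y' - y'' ((p : E × StrongDual ℝ E)).2 - y' ((p : E × StrongDual ℝ E)).1
      + ((p : E × StrongDual ℝ E)).2 ((p : E × StrongDual ℝ E)).1 :=
  pair_expand _ _ _ _

private lemma S_nonneg (hmono : MonoSet (A : Set (E × StrongDual ℝ E))) {p : E × StrongDual ℝ E}
    (hp : p ∈ A) : 0 ≤ p.2 p.1 := by
  have h := hmono.2 p hp 0 A.zero_mem
  simpa using h

/-- Under the annihilator condition, `y'' y'` is a lower bound for the infimand. -/
private lemma ann_lower (hmono : MonoSet (A : Set (E × StrongDual ℝ E)))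
    (y' : StrongDual ℝ E) (y'' : StrongDual ℝ (StrongDual ℝ E))
    (hann : ∀ q ∈ A, y' q.1 + y'' q.2 = 0) (p : ↥A) :
    y'' y' ≤ fE A y' y'' p := by
  rw [fE_apply]
  have h1 := hann (p : E × StrongDual ℝ E) p.2
  have h2 := S_nonneg A hmono p.2
  linarith

private lemma ann_iInf_le (y' : StrongDual ℝ E) (y'' : StrongDual ℝ (StrongDual ℝ E))
    (hmono : MonoSet (A : Set (E × StrongDual ℝ E)))
    (hann : ∀ q ∈ A, y' q.1 + y'' q.2 = 0) :
    iInf (fE A y' y'') ≤ y'' y' := by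
  have hbdd : BddBelow (Set.range (fE A y' y'')) := by
    refine ⟨y'' y', ?_⟩
    rintro r ⟨p, rfl⟩
    exact ann_lower A hmono y' y'' hann p
  have h0 : fE A y' y'' ⟨0, A.zero_mem⟩ = y'' y' := by
    rw [fE_apply]
    simp
  calc iInf (fE A y' y'') ≤ fE A y' y'' ⟨0, A.zero_mem⟩ := ciInf_le hbdd _
    _ = y'' y' := h0

end Helpers

section Main
set_option maxHeartbeats 0

variable {E : Type*} [NormedAddCommGroup E] [NormedSpace ℝ E]
variable (A : Subspace ℝ (E × StrongDual ℝ E))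

/-- Condition (iii) implies condition (ii); the type (NI) property. -/
private theorem key_iii_to_ii (hmono : MonoSet (A : Set (E × StrongDual ℝ E)))
    (hiii : ∀ (y' : StrongDual ℝ E) (y'' : StrongDual ℝ (StrongDual ℝ E)),
        (∀ p ∈ A, y' p.1 + y'' p.2 = 0) →
        ⨅ p : A, ((y'' - inclusionInDoubleDual ℝ E ((p : E × StrongDual ℝ E)).1)
          (y' - ((p : E × StrongDual ℝ E)).2)) ≤ 0)
    (y' : StrongDual ℝ E) (y'' : StrongDual ℝ (StrongDual ℝ E)) :
    ⨅ p : A, ((y'' - inclusionInDoubleDual ℝ E ((p : E × StrongDual ℝ E)).1)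
      (y' - ((p : E × StrongDual ℝ E)).2)) ≤ 0 := by
  haveI : Nonempty ↥A := ⟨0⟩
  show iInf (fE A y' y'') ≤ 0
  by_cases hbdd : BddBelow (Set.range (fE A y' y''))
  swap
  · rw [Real.iInf_of_not_bddBelow hbdd]
  by_contra hm'
  push_neg at hm'
  set m : ℝ := iInf (fE A y' y'') with hm_def
  -- `0 < m`
  have hm : 0 < m := hm'
  set c : ℝ := y'' y' with hc_def
  have hmc : m ≤ c := by
    have h := ciInf_le hbdd (⟨0, A.zero_mem⟩ : ↥A)
    have h0 : fE A y' y'' ⟨0, A.zero_mem⟩ = c := by rw [fE_apply]; simp [hc_def]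
    rw [h0] at h
    exact h
  set M : ℝ := c - m with hM_def
  have hM0 : 0 ≤ M := by simp only [hM_def]; linarith
  set a : ℝ := Real.sqrt M with ha_def
  have ha0 : 0 ≤ a := Real.sqrt_nonneg M
  have ha2 : a ^ 2 = M := Real.sq_sqrt hM0
  set Y : ℝ := ‖y'‖ + ‖y''‖ with hY_def
  have hY0 : 0 ≤ Y := by positivity
  set K : ℝ := 2 * a + 2 * Y + 5 with hK_def
  have hK0 : 0 < K + 1 := by positivity
  set ε : ℝ := min 1 (m / (K + 1)) with hε_def
  have hε : 0 < ε := lt_min one_pos (div_pos hm hK0)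
  have hε1 : ε ≤ 1 := min_le_left _ _
  have hεK : ε * K < m := by
    have h1 : ε ≤ m / (K + 1) := min_le_right _ _
    have h2 : ε * (K + 1) ≤ m := by
      rw [← le_div_iff₀ hK0]; exact h1
    have h3 : ε * K = ε * (K + 1) - ε := by ring
    linarith
  -- global bound: `L(q) - S(q) ≤ M` for all `q ∈ A`
  have hLB : ∀ q ∈ A, (y' q.1 + y'' q.2) - q.2 q.1 ≤ M := by
    intro q hq
    have h := ciInf_le hbdd (⟨q, hq⟩ : ↥A)
    have h0 := fE_apply A y' y'' ⟨q, hq⟩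
    rw [h0] at h
    simp only [hM_def, hc_def]
    linarith
  -- choose a near-minimizer `p`
  have hlt : iInf (fE A y' y'') < m + ε ^ 2 := by
    rw [← hm_def]; linarith [pow_pos hε 2]
  obtain ⟨p, hp⟩ := exists_lt_of_ciInf_lt hlt
  set x : E := (p : E × StrongDual ℝ E).1 with hx_def
  set x' : StrongDual ℝ E := (p : E × StrongDual ℝ E).2 with hx'_def
  set S : ℝ := x' x with hS_def
  set L : ℝ := y' x + y'' x' with hL_def
  have hS0 : 0 ≤ S := S_nonneg A hmono p.2
  have hfp : fE A y' y'' p = c - L + S := by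
    rw [fE_apply]; simp only [hc_def, hL_def, hS_def, hx_def, hx'_def]; ring
  set δ : ℝ := fE A y' y'' p - m with hδ_def
  have hδ0 : 0 ≤ δ := by
    have h := ciInf_le hbdd p
    simp only [hδ_def]; linarith
  have hδε : δ < ε ^ 2 := by simp only [hδ_def]; linarith
  have hLp : L = M + S - δ := by
    have e1 : δ = fE A y' y'' p - m := hδ_def
    have e2 : M = c - m := hM_def
    linarith [hfp]
  -- `L ^ 2 ≤ 4 M S`
  have hL2 : L ^ 2 ≤ 4 * M * S := by
    apply sq_le_of_forall_quad hS0 hM0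
    intro t
    have htp : t • (p : E × StrongDual ℝ E) ∈ A := A.smul_mem t p.2
    have h := hLB _ htp
    rw [Prod.smul_fst, Prod.smul_snd] at h
    rw [show (p : E × StrongDual ℝ E).1 = x from rfl, show (p : E × StrongDual ℝ E).2 = x' from rfl] at h
    simp only [map_smul, smul_eq_mul, ContinuousLinearMap.smul_apply] at h
    have hrw : t * L - t ^ 2 * S = t * y' x + t * y'' x' - t * (t * x' x) := by
      rw [hL_def, hS_def]; ring
    linarith [h, hrw]
  -- `S ≤ (a + ε) ^ 2`
  have hSub : S ≤ M + 2 * a * ε + ε ^ 2 := by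
    refine S_upper hM0 hS0 hδ0 hδε hε ha0 ha2 ?_
    rw [← hLp]; exact hL2
  -- the "gradient" functional
  set Ψ : (E × StrongDual ℝ E) →L[ℝ] ℝ :=
    (y' - x').comp (ContinuousLinearMap.fst ℝ E (StrongDual ℝ E))
      + ((y'' - inclusionInDoubleDual ℝ E x).comp
          (ContinuousLinearMap.snd ℝ E (StrongDual ℝ E))) with hΨ_def
  have hΨ : ∀ q : E × StrongDual ℝ E, Ψ q = y' q.1 + y'' q.2 - x' q.1 - q.2 x := by
    intro q
    simp only [hΨ_def, ContinuousLinearMap.add_apply, ContinuousLinearMap.coe_comp',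
      Function.comp_apply, ContinuousLinearMap.coe_fst', ContinuousLinearMap.coe_snd',
      ContinuousLinearMap.sub_apply, NormedSpace.dual_def]
    ring
  have hΨbound : ∀ q ∈ A, Ψ q ≤ δ + q.2 q.1 := by
    intro q hq
    have hsum : (p : E × StrongDual ℝ E) + q ∈ A := A.add_mem p.2 hq
    have h := ciInf_le hbdd (⟨(p : E × StrongDual ℝ E) + q, hsum⟩ : ↥A)
    have h0 := fE_apply A y' y'' ⟨(p : E × StrongDual ℝ E) + q, hsum⟩
    rw [Prod.fst_add, Prod.snd_add,
      show (p : E × StrongDual ℝ E).1 = x from rfl, show (p : E × StrongDual ℝ E).2 = x' from rfl] at h0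
    simp only [map_add, ContinuousLinearMap.add_apply] at h0
    rw [h0] at h
    have h3 := hΨ q
    have h4 : fE A y' y'' p = m + δ := by simp only [hδ_def]; ring
    rw [hfp] at h4
    simp only [hc_def, hL_def, hS_def, hx_def, hx'_def] at *
    linarith
  have hΨsq : ∀ q ∈ A, (Ψ q) ^ 2 ≤ 4 * δ * (q.2 q.1) := by
    intro q hq
    apply sq_le_of_forall_quad (S_nonneg A hmono hq) hδ0
    intro t
    have htq : t • q ∈ A := A.smul_mem t hq
    have h := hΨbound _ htq
    have h1 : Ψ (t • q) = t * Ψ q := by rw [map_smul]; simp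
    have h2 : (t • q).2 ((t • q).1) = t ^ 2 * (q.2 q.1) := by
      rw [Prod.smul_fst, Prod.smul_snd]
      simp only [ContinuousLinearMap.smul_apply, map_smul, smul_eq_mul]
      ring
    rw [h1, h2] at h
    exact h
  have hΨnorm : ∀ q ∈ A, |Ψ q| ≤ 2 * ε * ‖q‖ := by
    intro q hq
    have h1 := hΨsq q hq
    have h2 : q.2 q.1 ≤ ‖q.2‖ * ‖q.1‖ := by
      have := q.2.le_opNorm q.1
      rw [Real.norm_eq_abs] at this
      exact le_trans (le_abs_self _) this
    have h3 : ‖q.1‖ ≤ ‖q‖ := norm_fst_le q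
    have h4 : ‖q.2‖ ≤ ‖q‖ := norm_snd_le q
    have h5 : 0 ≤ q.2 q.1 := S_nonneg A hmono hq
    have h8 : q.2 q.1 ≤ ‖q‖ ^ 2 := by
      calc q.2 q.1 ≤ ‖q.2‖ * ‖q.1‖ := h2
        _ ≤ ‖q‖ * ‖q‖ := mul_le_mul h4 h3 (norm_nonneg _) (norm_nonneg _)
        _ = ‖q‖ ^ 2 := (sq ‖q‖).symm
    exact abs_le_two_eps h1 (le_of_lt hδε) h5 h8 (norm_nonneg q) (le_of_lt hε)
  -- extend the restriction of `Ψ` to `A` by Hahn–Banach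
  set φ : ↥A →L[ℝ] ℝ := Ψ.comp A.subtypeL with hφ_def
  have hφnorm : @norm _ (@ContinuousLinearMap.hasOpNorm ℝ ℝ ↥A ℝ _ _ _ _ _ _ (RingHom.id ℝ)) φ ≤ 2 * ε := by
    apply ContinuousLinearMap.opNorm_le_bound _ (by positivity)
    intro q
    have h1 : φ q = Ψ (q : E × StrongDual ℝ E) := rfl
    have h2 : ‖q‖ = ‖(q : E × StrongDual ℝ E)‖ := rfl
    rw [h1, h2, Real.norm_eq_abs]
    exact hΨnorm _ q.2
  obtain ⟨Φ, hΦext, hΦnorm⟩ := exists_extension_norm_eq A φ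
  have hΦbound : ∀ v : E × StrongDual ℝ E, |Φ v| ≤ 2 * ε * ‖v‖ := by
    intro v
    have h1 := Φ.le_opNorm v
    rw [Real.norm_eq_abs] at h1
    rw [hΦnorm] at h1
    calc |Φ v| ≤ @norm _ (@ContinuousLinearMap.hasOpNorm ℝ ℝ ↥A ℝ _ _ _ _ _ _ (RingHom.id ℝ)) φ * ‖v‖ := h1
      _ ≤ 2 * ε * ‖v‖ := mul_le_mul_of_nonneg_right hφnorm (norm_nonneg v)
  set e' : StrongDual ℝ E := Φ.comp (ContinuousLinearMap.inl ℝ E (StrongDual ℝ E)) with he'_def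
  set e'' : StrongDual ℝ (StrongDual ℝ E) := Φ.comp (ContinuousLinearMap.inr ℝ E (StrongDual ℝ E)) with he''_def
  have he' : ∀ w : E, e' w = Φ (w, 0) := by intro w; rfl
  have he'' : ∀ w : StrongDual ℝ E, e'' w = Φ (0, w) := by intro w; rfl
  have he'norm : ‖e'‖ ≤ 2 * ε := by
    apply ContinuousLinearMap.opNorm_le_bound _ (by positivity)
    intro w
    rw [Real.norm_eq_abs, he']
    calc |Φ (w, 0)| ≤ 2 * ε * ‖((w, 0) : E × StrongDual ℝ E)‖ := hΦbound _
      _ = 2 * ε * ‖w‖ := by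
          congr 1
          rw [Prod.norm_def]
          simp [max_eq_left (norm_nonneg w)]
  have he''norm : ‖e''‖ ≤ 2 * ε := by
    apply ContinuousLinearMap.opNorm_le_bound _ (by positivity)
    intro w
    rw [Real.norm_eq_abs, he'']
    calc |Φ (0, w)| ≤ 2 * ε * ‖((0, w) : E × StrongDual ℝ E)‖ := hΦbound _
      _ = 2 * ε * ‖w‖ := by
          congr 1
          rw [Prod.norm_def]
          simp [max_eq_right (norm_nonneg w)]
  have hsplit : ∀ v : E × StrongDual ℝ E, Φ v = e' v.1 + e'' v.2 := by
    intro v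
    rw [he', he'', ← map_add]
    congr 1
    ext <;> simp
  have hΦA : ∀ q ∈ A, Φ q = Ψ q := by
    intro q hq
    have h := hΦext ⟨q, hq⟩
    rw [h]
    rfl
  clear_value δ S L ε K a Y M c m φ Ψ e' e'' x x'
  -- the exact annihilator element
  set u' : StrongDual ℝ E := y' - x' - e' with hu'_def
  set u'' : StrongDual ℝ (StrongDual ℝ E) := y'' - inclusionInDoubleDual ℝ E x - e'' with hu''_def
  have hann : ∀ q ∈ A, u' q.1 + u'' q.2 = 0 := by
    intro q hq
    have h1 := hΨ q
    have h2 := hsplit q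
    have h3 := hΦA q hq
    simp only [hu'_def, hu''_def, ContinuousLinearMap.sub_apply, NormedSpace.dual_def]
    linarith
  have happ := hiii u' u'' hann
  have hlow : u'' u' ≤ ⨅ q : A, ((u'' - inclusionInDoubleDual ℝ E ((q : E × StrongDual ℝ E)).1)
      (u' - ((q : E × StrongDual ℝ E)).2)) :=
    le_ciInf (fun q => ann_lower A hmono u' u'' hann q)
  have hfinal0 : u'' u' ≤ 0 := le_trans hlow happ
  -- expand `u'' u'`
  have hval : u'' u' = c - y'' x' - y'' e' - y' x + x' x + e' x - e'' y' + e'' x' + e'' e' := by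
    simp only [hu'_def, hu''_def, ContinuousLinearMap.sub_apply, map_sub,
      NormedSpace.dual_def, hc_def]
    ring
  clear_value u' u''
  have hΦp : e' x + e'' x' = y' x + y'' x' - x' x - x' x := by
    have h1 := hsplit (p : E × StrongDual ℝ E)
    have h2 := hΦA _ p.2
    have h3 := hΨ (p : E × StrongDual ℝ E)
    simp only [← hx_def, ← hx'_def] at h1 h2 h3
    linarith
  -- numerical bounds
  have hb1 : y'' e' ≤ ‖y''‖ * (2 * ε) := by
    have h1 := y''.le_opNorm e'
    rw [Real.norm_eq_abs] at h1
    calc y'' e' ≤ |y'' e'| := le_abs_self _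
      _ ≤ ‖y''‖ * ‖e'‖ := h1
      _ ≤ ‖y''‖ * (2 * ε) := mul_le_mul_of_nonneg_left he'norm (norm_nonneg y'')
  have hb2 : e'' y' ≤ 2 * ε * ‖y'‖ := by
    have h1 := e''.le_opNorm y'
    rw [Real.norm_eq_abs] at h1
    calc e'' y' ≤ |e'' y'| := le_abs_self _
      _ ≤ ‖e''‖ * ‖y'‖ := h1
      _ ≤ 2 * ε * ‖y'‖ := mul_le_mul_of_nonneg_right he''norm (norm_nonneg _)
  have hb3 : -(e'' e') ≤ 4 * ε ^ 2 := by
    have h1 := e''.le_opNorm e'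
    rw [Real.norm_eq_abs] at h1
    have h2 : ‖e''‖ * ‖e'‖ ≤ 2 * ε * (2 * ε) :=
      mul_le_mul he''norm he'norm (norm_nonneg _) (by positivity)
    calc -(e'' e') ≤ |e'' e'| := neg_le_abs _
      _ ≤ ‖e''‖ * ‖e'‖ := h1
      _ ≤ 2 * ε * (2 * ε) := h2
      _ = 4 * ε ^ 2 := by ring
  -- conclude
  have hcS : c ≤ S + (y'' e' + e'' y') - e'' e' := by
    simp only [hS_def]
    linarith [hfinal0, hval, hΦp]
  have hfin : c ≤ M + ε * K := by
    have h1 : c ≤ M + 2 * a * ε + ε ^ 2 + ‖y''‖ * (2 * ε) + 2 * ε * ‖y'‖ + 4 * ε ^ 2 := by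
      linarith [hcS, hSub, hb1, hb2, hb3]
    have h2 : ε ^ 2 ≤ ε := by
      have h := mul_le_mul_of_nonneg_right hε1 (le_of_lt hε)
      calc ε ^ 2 = ε * ε := by ring
        _ ≤ 1 * ε := h
        _ = ε := one_mul ε
    have h3 : M + ε * K = M + 2 * a * ε + 2 * ε * ‖y'‖ + 2 * ε * ‖y''‖ + 5 * ε := by
      rw [hK_def, hY_def]; ring
    linarith [h1, h2, h3]
  have : c < c := by
    calc c ≤ M + ε * K := hfin
      _ < M + m := by linarith
      _ = c := by simp only [hM_def]; ring
  exact absurd this (lt_irrefl c)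

/-- Condition (ii) implies maximal monotonicity. -/
private theorem max_of_ii (hclosed : IsClosed (A : Set (E × StrongDual ℝ E)))
    (hmono : MonoSet (A : Set (E × StrongDual ℝ E)))
    (hii : ∀ (y' : StrongDual ℝ E) (y'' : StrongDual ℝ (StrongDual ℝ E)),
        ⨅ p : A, ((y'' - inclusionInDoubleDual ℝ E ((p : E × StrongDual ℝ E)).1)
          (y' - ((p : E × StrongDual ℝ E)).2)) ≤ 0) :
    MaxMonoSet (A : Set (E × StrongDual ℝ E)) := by
  haveI : Nonempty ↥A := ⟨0⟩
  refine ⟨hmono, fun A' hA' hsub => ?_⟩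
  refine Set.Subset.antisymm ?_ hsub
  intro z hz
  by_contra hzA
  obtain ⟨g, u, hgA, hu⟩ := geometric_hahn_banach_closed_point A.convex hclosed hzA
  have hg0 : ∀ v ∈ A, g v = 0 := by
    intro v hv
    by_contra hgv
    have h1 := hgA (((u + 1 + |u|) / g v) • v) (A.smul_mem _ hv)
    rw [map_smul, smul_eq_mul, div_mul_cancel₀ _ hgv] at h1
    linarith [abs_nonneg u, le_abs_self u]
  have hu0 : 0 < u := by
    have h := hgA 0 A.zero_mem
    simpa using h
  have hgz : 0 < g z := lt_trans hu0 hu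
  set Φ : (E × StrongDual ℝ E) →L[ℝ] ℝ := (g z)⁻¹ • g with hΦ_def
  set y'₀ : StrongDual ℝ E := Φ.comp (ContinuousLinearMap.inl ℝ E (StrongDual ℝ E)) with hy'_def
  set y''₀ : StrongDual ℝ (StrongDual ℝ E) := Φ.comp (ContinuousLinearMap.inr ℝ E (StrongDual ℝ E)) with hy''_def
  have hy' : ∀ w : E, y'₀ w = Φ (w, 0) := by intro w; rfl
  have hy'' : ∀ w : StrongDual ℝ E, y''₀ w = Φ (0, w) := by intro w; rfl
  have hsplit : ∀ v : E × StrongDual ℝ E, Φ v = y'₀ v.1 + y''₀ v.2 := by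
    intro v
    rw [hy', hy'', ← map_add]
    congr 1
    ext <;> simp
  have hΦ0 : ∀ v ∈ A, Φ v = 0 := by
    intro v hv
    simp only [hΦ_def, ContinuousLinearMap.smul_apply, smul_eq_mul]
    rw [hg0 v hv, mul_zero]
  have hann0 : ∀ v ∈ A, y'₀ v.1 + y''₀ v.2 = 0 := by
    intro v hv
    rw [← hsplit]
    exact hΦ0 v hv
  have hα : y'₀ z.1 + y''₀ z.2 = 1 := by
    rw [← hsplit]
    simp only [hΦ_def, ContinuousLinearMap.smul_apply, smul_eq_mul]
    exact inv_mul_cancel₀ (ne_of_gt hgz)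
  have hrel : ∀ v ∈ A, 0 ≤ (z.2 - v.2) (z.1 - v.1) := fun v hv => hA'.2 z hz v (hsub hv)
  set β : ℝ := y''₀ y'₀ with hβ_def
  set lam : ℝ := (|β| + 1)⁻¹ with hlam_def
  have hlam : 0 < lam := by positivity
  have hlam1 : lam * (|β| + 1) = 1 := inv_mul_cancel₀ (by positivity)
  have hIi := hii (lam • y'₀ + z.2) (lam • y''₀ + inclusionInDoubleDual ℝ E z.1)
  have hlb : ∀ q : A, lam ^ 2 * β + lam ≤
      (((lam • y''₀ + inclusionInDoubleDual ℝ E z.1)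
          - inclusionInDoubleDual ℝ E ((q : E × StrongDual ℝ E)).1)
        ((lam • y'₀ + z.2) - ((q : E × StrongDual ℝ E)).2)) := by
    intro q
    rw [pair_expand]
    have h1 := hann0 (q : E × StrongDual ℝ E) q.2
    have h2 := hrel (q : E × StrongDual ℝ E) q.2
    have h3 : (z.2 - (q : E × StrongDual ℝ E).2) (z.1 - (q : E × StrongDual ℝ E).1)
        = z.2 z.1 - z.2 (q : E × StrongDual ℝ E).1 - (q : E × StrongDual ℝ E).2 z.1
          + (q : E × StrongDual ℝ E).2 (q : E × StrongDual ℝ E).1 := by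
      simp only [ContinuousLinearMap.sub_apply, map_sub]
      ring
    rw [h3] at h2
    have h1' : lam * (y'₀ (q : E × StrongDual ℝ E).1 + y''₀ (q : E × StrongDual ℝ E).2) = lam * 0 := by
      rw [h1]
    have hα' : lam * (y'₀ z.1 + y''₀ z.2) = lam * 1 := by rw [hα]
    simp only [ContinuousLinearMap.add_apply, ContinuousLinearMap.smul_apply, map_add,
      map_smul, smul_eq_mul, NormedSpace.dual_def]
    rw [mul_zero] at h1'
    rw [mul_one] at hα'
    rw [hβ_def]
    ring_nf
    ring_nf at h1' hα' h2
    linarith [h1', hα', h2]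
  have hle : lam ^ 2 * β + lam ≤ 0 := le_trans (le_ciInf hlb) hIi
  have hβb : lam ^ 2 * (-|β|) ≤ lam ^ 2 * β :=
    mul_le_mul_of_nonneg_left (neg_abs_le β) (by positivity)
  have hkey : lam ^ 2 * |β| = lam - lam ^ 2 := by linear_combination lam * hlam1
  linarith [hle, hβb, hkey, mul_pos hlam hlam]

/-- Condition (iii) implies condition (i). -/
private theorem i_of_iii (hmono : MonoSet (A : Set (E × StrongDual ℝ E)))
    (hiii : ∀ (y' : StrongDual ℝ E) (y'' : StrongDual ℝ (StrongDual ℝ E)),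
        (∀ p ∈ A, y' p.1 + y'' p.2 = 0) →
        ⨅ p : A, ((y'' - inclusionInDoubleDual ℝ E ((p : E × StrongDual ℝ E)).1)
          (y' - ((p : E × StrongDual ℝ E)).2)) ≤ 0) :
    MonoSetStar (adjointSubspace (A : Set (E × StrongDual ℝ E))) := by
  constructor
  · exact ⟨(0, 0), fun p hp => by simp⟩
  · intro p hp q hq
    set r1 : StrongDual ℝ E := p.1 - q.1 with hr1
    set r2 : StrongDual ℝ (StrongDual ℝ E) := p.2 - q.2 with hr2
    have hann : ∀ v ∈ A, r1 v.1 + (-r2) v.2 = 0 := by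
      intro v hv
      have h1 := hp v hv
      have h2 := hq v hv
      simp only [hr1, hr2, ContinuousLinearMap.sub_apply, ContinuousLinearMap.neg_apply]
      linarith
    have happ := hiii r1 (-r2) hann
    have hlow : (-r2) r1 ≤ ⨅ v : A, (((-r2) - inclusionInDoubleDual ℝ E ((v : E × StrongDual ℝ E)).1)
        (r1 - ((v : E × StrongDual ℝ E)).2)) :=
      le_ciInf (fun v => ann_lower A hmono r1 (-r2) hann v)
    have h := le_trans hlow happ
    simp only [ContinuousLinearMap.neg_apply] at h
    show 0 ≤ r2 r1
    linarith

/-- Condition (i) implies condition (iii). -/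
private theorem iii_of_i (hmono : MonoSet (A : Set (E × StrongDual ℝ E)))
    (hi : MonoSetStar (adjointSubspace (A : Set (E × StrongDual ℝ E))))
    (y' : StrongDual ℝ E) (y'' : StrongDual ℝ (StrongDual ℝ E))
    (hann : ∀ p ∈ A, y' p.1 + y'' p.2 = 0) :
    ⨅ p : A, ((y'' - inclusionInDoubleDual ℝ E ((p : E × StrongDual ℝ E)).1)
      (y' - ((p : E × StrongDual ℝ E)).2)) ≤ 0 := by
  have hr : (y', -y'') ∈ adjointSubspace (A : Set (E × StrongDual ℝ E)) := by
    intro v hv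
    have h := hann v hv
    simp only [ContinuousLinearMap.neg_apply]
    linarith
  have h0 : ((0 : StrongDual ℝ E), (0 : StrongDual ℝ (StrongDual ℝ E)))
      ∈ adjointSubspace (A : Set (E × StrongDual ℝ E)) := fun v hv => by simp
  have h := hi.2 (y', -y'') hr (0, 0) h0
  simp only [sub_zero, ContinuousLinearMap.neg_apply, ContinuousLinearMap.sub_apply,
    ContinuousLinearMap.zero_apply] at h
  have hy : y'' y' ≤ 0 := by linarith
  calc ⨅ p : A, ((y'' - inclusionInDoubleDual ℝ E ((p : E × StrongDual ℝ E)).1)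
        (y' - ((p : E × StrongDual ℝ E)).2)) ≤ y'' y' := ann_iInf_le A y' y'' hmono hann
    _ ≤ 0 := hy

end Main

theorem stmt16 (E : Type*) [NormedAddCommGroup E] [NormedSpace ℝ E] [CompleteSpace E]
    [Nontrivial E]
    (A : Subspace ℝ (E × StrongDual ℝ E)) (hclosed : IsClosed (A : Set (E × StrongDual ℝ E)))
    (hmono : MonoSet (A : Set (E × StrongDual ℝ E))) :
    -- (i) ↔ (ii)
    (MonoSetStar (adjointSubspace (A : Set (E × StrongDual ℝ E))) ↔
      (∀ (y' : StrongDual ℝ E) (y'' : StrongDual ℝ (StrongDual ℝ E)),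
        ⨅ p : A, ((y'' - inclusionInDoubleDual ℝ E ((p : E × StrongDual ℝ E)).1)
          (y' - ((p : E × StrongDual ℝ E)).2)) ≤ 0)) ∧
    -- (ii) ↔ (iii)
    ((∀ (y' : StrongDual ℝ E) (y'' : StrongDual ℝ (StrongDual ℝ E)),
        ⨅ p : A, ((y'' - inclusionInDoubleDual ℝ E ((p : E × StrongDual ℝ E)).1)
          (y' - ((p : E × StrongDual ℝ E)).2)) ≤ 0) ↔
      (∀ (y' : StrongDual ℝ E) (y'' : StrongDual ℝ (StrongDual ℝ E)),
        (∀ p ∈ A, y' p.1 + y'' p.2 = 0) →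
        ⨅ p : A, ((y'' - inclusionInDoubleDual ℝ E ((p : E × StrongDual ℝ E)).1)
          (y' - ((p : E × StrongDual ℝ E)).2)) ≤ 0)) ∧
    -- (iii) ↔ (iv)
    ((∀ (y' : StrongDual ℝ E) (y'' : StrongDual ℝ (StrongDual ℝ E)),
        (∀ p ∈ A, y' p.1 + y'' p.2 = 0) →
        ⨅ p : A, ((y'' - inclusionInDoubleDual ℝ E ((p : E × StrongDual ℝ E)).1)
          (y' - ((p : E × StrongDual ℝ E)).2)) ≤ 0) ↔
      (MaxMonoSet (A : Set (E × StrongDual ℝ E)) ∧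
        ∀ (y' : StrongDual ℝ E) (y'' : StrongDual ℝ (StrongDual ℝ E)),
          ⨅ p : A, ((y'' - inclusionInDoubleDual ℝ E ((p : E × StrongDual ℝ E)).1)
            (y' - ((p : E × StrongDual ℝ E)).2)) ≤ 0)) := by
  refine ⟨⟨fun h1 => key_iii_to_ii A hmono (iii_of_i A hmono h1),
           fun h2 => i_of_iii A hmono (fun y' y'' _ => h2 y' y'')⟩,
          ⟨fun h y' y'' _ => h y' y'', fun h => key_iii_to_ii A hmono h⟩,
          ⟨fun h => ⟨max_of_ii A hclosed hmono (key_iii_to_ii A hmono h),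
                     key_iii_to_ii A hmono h⟩,
           fun h y' y'' _ => h.2 y' y''⟩⟩
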